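/- Let A and B be lattices each having a least element 0, let n be a positive integer, and let a_0, …, a_{n-1} ∈ A and b_0, …, b_{n-1} ∈ B. Then the join ⋁_{i<n} a_i ⊗ b_i in the lattice of bi-ideals of A×B (i.e., the smallest bi-ideal containing each pure tensor a_i ⊗ b_i) equals the union, over all lattice terms P in n variables, of the pure tensors P(a_0,…,a_{n-1}) ⊗ P^d(b_0,…,b_{n-1}), where P^d denotes the dual term of P. -/
import Mathlib


/-! Tensor products of lattices with zero: bi-ideals, pure tensors,
compact bi-ideals, capped bi-ideals. -/

universe u v

section TensorDefs

variable {A : Type u} {B : Type v}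

/-- The set `⊥_{A,B} = (A × {0}) ∪ ({0} × B)`. -/
def tensorBot (A : Type u) (B : Type v) [Lattice A] [OrderBot A]
    [Lattice B] [OrderBot B] : Set (A × B) :=
  {p | p.1 = ⊥ ∨ p.2 = ⊥}

/-- A bi-ideal of `A × B`: a down-set containing `⊥_{A,B}` and closed under
lateral joins. -/
def IsBiIdeal [Lattice A] [OrderBot A] [Lattice B] [OrderBot B]
    (I : Set (A × B)) : Prop :=
  tensorBot A B ⊆ I ∧
  (∀ p ∈ I, ∀ q : A × B, q.1 ≤ p.1 → q.2 ≤ p.2 → q ∈ I) ∧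
  (∀ a : A, ∀ b b' : B, (a, b) ∈ I → (a, b') ∈ I → (a, b ⊔ b') ∈ I) ∧
  (∀ a a' : A, ∀ b : B, (a, b) ∈ I → (a', b) ∈ I → (a ⊔ a', b) ∈ I)

/-- The pure tensor `a ⊗ b = ⊥_{A,B} ∪ {(x,y) : x ≤ a ∧ y ≤ b}`. -/
def pureTensor [Lattice A] [OrderBot A] [Lattice B] [OrderBot B]
    (a : A) (b : B) : Set (A × B) :=
  tensorBot A B ∪ {p | p.1 ≤ a ∧ p.2 ≤ b}

/-- The smallest bi-ideal of `A × B` containing a given set, i.e. the join in the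
lattice `A ⊗̄ B` of bi-ideals of the pure tensors contained in it. -/
def biIdealGen [Lattice A] [OrderBot A] [Lattice B] [OrderBot B]
    (S : Set (A × B)) : Set (A × B) :=
  ⋂₀ {I : Set (A × B) | IsBiIdeal I ∧ S ⊆ I}

/-- The compact elements of `A ⊗̄ B` are exactly the bi-ideals that are finite
joins of pure tensors; these form the tensor product `A ⊗ B`. -/
def IsCompactBiIdeal [Lattice A] [OrderBot A] [Lattice B] [OrderBot B]
    (I : Set (A × B)) : Prop :=
  ∃ s : Finset (A × B), I = biIdealGen (⋃ p ∈ s, pureTensor p.1 p.2)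

/-- `A ⊗ B` is a lattice iff the intersection of any two compact bi-ideals is
compact. -/
def TensorIsLattice (A : Type u) (B : Type v) [Lattice A] [OrderBot A]
    [Lattice B] [OrderBot B] : Prop :=
  ∀ I J : Set (A × B), IsCompactBiIdeal I → IsCompactBiIdeal J →
    IsCompactBiIdeal (I ∩ J)

/-- A bi-ideal is capped if it is the down-set generated by `Γ ∪ ⊥_{A,B}` for some
finite `Γ ⊆ A × B`. -/
def IsCappedBiIdeal [Lattice A] [OrderBot A] [Lattice B] [OrderBot B]
    (I : Set (A × B)) : Prop :=
  ∃ Γ : Finset (A × B),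
    I = tensorBot A B ∪ {q : A × B | ∃ p ∈ Γ, q.1 ≤ p.1 ∧ q.2 ≤ p.2}

/-- `A ⊗ B` is a capped tensor product if every element of `A ⊗ B` (i.e. every
compact bi-ideal of `A × B`) is capped. -/
def IsCappedTensorProduct (A : Type u) (B : Type v) [Lattice A] [OrderBot A]
    [Lattice B] [OrderBot B] : Prop :=
  ∀ I : Set (A × B), IsCompactBiIdeal I → IsCappedBiIdeal I

end TensorDefs
/-- Lattice terms in `n` variables. -/
inductive LatTerm (n : ℕ) : Type
  | var : Fin n → LatTerm n
  | meet : LatTerm n → LatTerm n → LatTerm n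
  | join : LatTerm n → LatTerm n → LatTerm n

namespace LatTerm

/-- Evaluation of a lattice term in a lattice. -/
def eval {n : ℕ} {M : Type u} [Lattice M] (v : Fin n → M) : LatTerm n → M
  | var i => v i
  | meet s t => eval v s ⊓ eval v t
  | join s t => eval v s ⊔ eval v t

/-- The dual of a lattice term: interchange `∧` and `∨` throughout. -/
def dual {n : ℕ} : LatTerm n → LatTerm n
  | var i => var i
  | meet s t => join (dual s) (dual t)
  | join s t => meet (dual s) (dual t)

end LatTerm

/-- Lemma 2.2(iii) of Grätzer–Wehrung: for lattices `A`, `B`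
with zero, the join `⋁_{i<n} a_i ⊗ b_i` in the lattice of bi-ideals of `A × B`
equals the union over all lattice terms `P` in `n` variables of the pure tensors
`P(a⃗) ⊗ P^d(b⃗)`. -/
theorem biIdealGen_pureTensors_eq_iUnion_terms {A : Type u} {B : Type v}
    [Lattice A] [OrderBot A] [Lattice B] [OrderBot B]
    {n : ℕ} (hn : 0 < n) (a : Fin n → A) (b : Fin n → B) :
    biIdealGen (⋃ i : Fin n, pureTensor (a i) (b i)) =
      ⋃ P : LatTerm n, pureTensor (P.eval a) (P.dual.eval b) := by
  apply subset_antisymm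
  · apply Set.sInter_subset_of_mem
    constructor
    · refine ⟨?_, ?_, ?_, ?_⟩
      · intro p hp
        exact Set.mem_iUnion.2 ⟨LatTerm.var ⟨0, hn⟩, Or.inl hp⟩
      · intro p hp q hq1 hq2
        obtain ⟨P, hP⟩ := Set.mem_iUnion.1 hp
        rcases hP with hb | ⟨h1, h2⟩
        · rcases hb with hb | hb
          · exact Set.mem_iUnion.2 ⟨P, Or.inl (Or.inl (le_bot_iff.1 (hb ▸ hq1)))⟩
          · exact Set.mem_iUnion.2 ⟨P, Or.inl (Or.inr (le_bot_iff.1 (hb ▸ hq2)))⟩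
        · exact Set.mem_iUnion.2 ⟨P, Or.inr ⟨hq1.trans h1, hq2.trans h2⟩⟩
      · intro x y y' h1 h2
        obtain ⟨P, hP⟩ := Set.mem_iUnion.1 h1
        obtain ⟨Q, hQ⟩ := Set.mem_iUnion.1 h2
        rcases hP with (hx | hy) | ⟨hPa, hPb⟩
        · exact Set.mem_iUnion.2 ⟨P, Or.inl (Or.inl hx)⟩
        · simp only at hy
          have : (x, y ⊔ y') = (x, y') := by simp [hy]
          rw [this]; exact h2
        · rcases hQ with (hx | hy') | ⟨hQa, hQb⟩
          · exact Set.mem_iUnion.2 ⟨Q, Or.inl (Or.inl hx)⟩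
          · simp only at hy'
            have : (x, y ⊔ y') = (x, y) := by simp [hy']
            rw [this]; exact h1
          · refine Set.mem_iUnion.2 ⟨LatTerm.meet P Q, Or.inr ?_⟩
            exact ⟨le_inf hPa hQa, sup_le (hPb.trans le_sup_left) (hQb.trans le_sup_right)⟩
      · intro x x' y h1 h2
        obtain ⟨P, hP⟩ := Set.mem_iUnion.1 h1
        obtain ⟨Q, hQ⟩ := Set.mem_iUnion.1 h2
        rcases hP with (hx | hy) | ⟨hPa, hPb⟩
        · simp only at hx
          have : (x ⊔ x', y) = (x', y) := by simp [hx]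
          rw [this]; exact h2
        · exact Set.mem_iUnion.2 ⟨P, Or.inl (Or.inr hy)⟩
        · rcases hQ with (hx' | hy) | ⟨hQa, hQb⟩
          · simp only at hx'
            have : (x ⊔ x', y) = (x, y) := by simp [hx']
            rw [this]; exact h1
          · exact Set.mem_iUnion.2 ⟨Q, Or.inl (Or.inr hy)⟩
          · refine Set.mem_iUnion.2 ⟨LatTerm.join P Q, Or.inr ?_⟩
            exact ⟨sup_le (hPa.trans le_sup_left) (hQa.trans le_sup_right), le_inf hPb hQb⟩
    · refine Set.iUnion_subset fun i => ?_
      intro p hp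
      rcases hp with hb | ⟨h1, h2⟩
      · exact Set.mem_iUnion.2 ⟨LatTerm.var i, Or.inl hb⟩
      · exact Set.mem_iUnion.2 ⟨LatTerm.var i, Or.inr ⟨h1, h2⟩⟩
  · refine Set.iUnion_subset fun P p hp => ?_
    intro I hI
    obtain ⟨⟨hbot, hdown, hlat1, hlat2⟩, hS⟩ := hI
    rcases hp with hb | ⟨h1, h2⟩
    · exact hbot hb
    · have key : ∀ Q : LatTerm n, (Q.eval a, Q.dual.eval b) ∈ I := by
        intro Q
        induction Q with
        | var i => exact hS (Set.mem_iUnion.2 ⟨i, Or.inr ⟨le_rfl, le_rfl⟩⟩)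
        | meet s t ihs iht =>
          have hA : (s.eval a ⊓ t.eval a, s.dual.eval b) ∈ I :=
            hdown _ ihs _ inf_le_left le_rfl
          have hB : (s.eval a ⊓ t.eval a, t.dual.eval b) ∈ I :=
            hdown _ iht _ inf_le_right le_rfl
          exact hlat1 _ _ _ hA hB
        | join s t ihs iht =>
          have hA : (s.eval a, s.dual.eval b ⊓ t.dual.eval b) ∈ I :=
            hdown _ ihs _ le_rfl inf_le_left
          have hB : (t.eval a, s.dual.eval b ⊓ t.dual.eval b) ∈ I :=
            hdown _ iht _ le_rfl inf_le_right
          exact hlat2 _ _ _ hA hB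
      exact hdown _ (key P) p h1 h2
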